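/- For each p ∈ (0,2], the function r_p is continuous and strictly decreasing on [0,1], with r_p(0) = 1/√2 and r_p(1) = p/(2+p). -/

import Mathlib

open Real Set Filter Topology

/-- `C p` is the unique solution in `(0,1)` of `1 - x - x^p = 0` (for `p > 0`),
realized via Hilbert's epsilon operator. -/
noncomputable def Cp (p : ℝ) : ℝ :=
  Classical.epsilon (fun x : ℝ => x ∈ Set.Ioo (0 : ℝ) 1 ∧ 1 - x - x ^ p = 0)

/-- The function `r_p : [0,1] → ℝ` from the paper:
`r_p(x) = (1-x^p)/√(1-x^2+(1-x^p)^2)` for `x ∈ [0, C(p))`,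
`r_p(x) = (1-x^p)/(1-x^2+x(1-x^p))` for `x ∈ [C(p), 1)`, and `r_p(1) = p/(2+p)`. -/
noncomputable def rp (p : ℝ) : ℝ → ℝ := fun x =>
  if x = 1 then p / (2 + p)
  else if x < Cp p then (1 - x ^ p) / Real.sqrt (1 - x ^ 2 + (1 - x ^ p) ^ 2)
  else (1 - x ^ p) / (1 - x ^ 2 + x * (1 - x ^ p))

namespace Statement2Aux

noncomputable def g1 (p : ℝ) : ℝ → ℝ := fun x =>
  (1 - x ^ p) / Real.sqrt (1 - x ^ 2 + (1 - x ^ p) ^ 2)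

noncomputable def g2 (p : ℝ) : ℝ → ℝ := fun x =>
  (1 - x ^ p) / (1 - x ^ 2 + x * (1 - x ^ p))

lemma Cp_spec {p : ℝ} (hp0 : 0 < p) :
    Cp p ∈ Set.Ioo (0:ℝ) 1 ∧ 1 - Cp p - Cp p ^ p = 0 := by
  apply Classical.epsilon_spec (p := fun x : ℝ => x ∈ Set.Ioo (0 : ℝ) 1 ∧ 1 - x - x ^ p = 0)
  have hcont : ContinuousOn (fun x : ℝ => 1 - x - x ^ p) (Set.Icc 0 1) := by
    apply (continuousOn_const.sub continuousOn_id).sub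
    intro x _
    exact (Real.continuousAt_rpow_const x p (Or.inr hp0.le)).continuousWithinAt
  have h0 : (fun x : ℝ => 1 - x - x ^ p) 0 = 1 := by
    simp [Real.zero_rpow hp0.ne']
  have h1 : (fun x : ℝ => 1 - x - x ^ p) 1 = -1 := by
    simp [Real.one_rpow]
  have := intermediate_value_Ioo' (zero_le_one) hcont
  simp only [h0, h1] at this
  have h0m : (0:ℝ) ∈ Set.Ioo (-1:ℝ) 1 := by norm_num
  obtain ⟨c, hc, hceq⟩ := this h0m
  exact ⟨c, hc, hceq⟩

lemma bern_le {x t : ℝ} (hx : 0 ≤ x) (ht0 : 0 ≤ t) (ht1 : t ≤ 1) :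
    x ^ t ≤ 1 + t * (x - 1) := by
  have := rpow_one_add_le_one_add_mul_self (s := x - 1) (by linarith) ht0 ht1
  simpa using this

lemma bern_ge {x t : ℝ} (hx : 0 ≤ x) (ht : 1 ≤ t) :
    1 + t * (x - 1) ≤ x ^ t := by
  have := one_add_mul_self_le_rpow_one_add (s := x - 1) (by linarith) ht
  simpa using this

lemma psi_lt {p x : ℝ} (hp0 : 0 < p) (hp2 : p ≤ 2) (hx0 : 0 < x) (hx1 : x < 1) :
    x * (1 - x ^ p) < p * x ^ (p - 1) * (1 - x ^ 2) := by
  set u := x ^ (p - 1) with hu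
  have hu0 : 0 < u := Real.rpow_pos_of_pos hx0 _
  have hux : u * x = x ^ p := by
    have : x ^ p = x ^ (p - 1) * x ^ (1:ℝ) := by
      rw [← Real.rpow_add hx0]; norm_num
    rw [this, Real.rpow_one, hu]
  have hux2 : u * x ^ 2 = x ^ (p + 1) := by
    have : x ^ (p + 1) = x ^ (p - 1) * x ^ ((2:ℕ):ℝ) := by
      rw [← Real.rpow_add hx0]; congr 1; push_cast; ring
    rw [this, Real.rpow_natCast, hu]
  have hb : x ^ (2 - p) ≤ 1 + (2 - p)/2 * (x ^ 2 - 1) := by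
    have h1 : x ^ (2 - p) = (x ^ (2:ℕ)) ^ ((2 - p)/2) := by
      rw [← Real.rpow_natCast x 2, ← Real.rpow_mul hx0.le]
      congr 1; ring
    rw [h1]
    exact bern_le (by positivity) (by linarith) (by linarith)
  have hux3 : u * x ^ (2 - p) = x := by
    have : x ^ (p - 1) * x ^ (2 - p) = x ^ ((1:ℝ)) := by
      rw [← Real.rpow_add hx0]; congr 1; ring
    rw [hu, this, Real.rpow_one]
  have hkey : x ≤ u * (1 + (2 - p)/2 * (x ^ 2 - 1)) := by
    calc x = u * x ^ (2 - p) := hux3.symm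
    _ ≤ u * (1 + (2 - p)/2 * (x ^ 2 - 1)) := by
        exact mul_le_mul_of_nonneg_left hb hu0.le
  have hx2 : x ^ 2 < 1 := by nlinarith
  nlinarith [mul_pos hu0 (by nlinarith : (0:ℝ) < 1 - x ^ 2), hux, hux2]

lemma F_pos {p x : ℝ} (hp0 : 0 < p) (hp2 : p ≤ 2) (hx0 : 0 < x) (hx1 : x < 1)
    (hNx : 1 - x ≤ x ^ p) :
    2 * x * (1 - x ^ p) < p * x ^ (p - 1) * (1 - x ^ 2) + (1 - x ^ p) ^ 2 := by
  set u := x ^ (p - 1) with hu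
  have hu0 : 0 < u := Real.rpow_pos_of_pos hx0 _
  have hux : u * x = x ^ p := by
    have : x ^ p = x ^ (p - 1) * x ^ (1:ℝ) := by
      rw [← Real.rpow_add hx0]; norm_num
    rw [this, Real.rpow_one, hu]
  set N := 1 - x ^ p with hN
  have hN0 : 0 < N := by
    have : x ^ p < 1 := Real.rpow_lt_one hx0.le hx1 hp0
    simp [hN]; linarith
  have hNxle : N ≤ x := by simp [hN]; linarith
  rcases le_or_gt p 1 with hp1 | hp1
  · have hbern : x ^ (1 - p) ≤ 1 + (1 - p) * (x - 1) := bern_le hx0.le (by linarith) (by linarith)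
    have hmul : u * x ^ (1 - p) = 1 := by
      rw [hu, ← Real.rpow_add hx0]
      norm_num
    have hA : N ≤ p * u * (1 - x) := by
      have h2 : 1 ≤ u * (1 + (1 - p) * (x - 1)) := by
        calc (1:ℝ) = u * x ^ (1 - p) := hmul.symm
        _ ≤ u * (1 + (1 - p) * (x - 1)) := mul_le_mul_of_nonneg_left hbern hu0.le
      have h3 : u * (1 + (1 - p) * (x - 1)) = u * x + p * u * (1 - x) := by ring
      rw [h3, hux] at h2
      simp [hN]; linarith
    nlinarith [mul_le_mul_of_nonneg_right hA (by linarith : (0:ℝ) ≤ 1 + x), hN0, hx0, hx1]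
  · have hB : N ≤ p * (1 - x) := by
      have := bern_ge (x := x) hx0.le hp1.le
      simp [hN]; nlinarith
    rcases le_total (p * (1 - x)) x with hcase | hcase
    · have hu_ge : x ≤ u := by
        have := Real.rpow_le_rpow_of_exponent_ge hx0 hx1.le (by linarith : p - 1 ≤ 1)
        rwa [Real.rpow_one] at this
      have hquad : (p * (1 - x)) ^ 2 - 2 * x * (p * (1 - x)) ≤ N ^ 2 - 2 * x * N := by
        nlinarith [mul_nonneg (sub_nonneg.2 hB) (by linarith : (0:ℝ) ≤ 2 * x - p * (1 - x) - N)]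
      have key1 : p * x * (1 - x ^ 2) ≤ p * u * (1 - x ^ 2) := by
        have h2 : (0:ℝ) ≤ 1 - x ^ 2 := by nlinarith
        nlinarith [mul_le_mul_of_nonneg_right hu_ge (mul_nonneg hp0.le h2)]
      have hfin : 0 < p * (1 - x) * ((1 - x) * (p - x)) := by
        apply mul_pos (mul_pos hp0 (by linarith)) (mul_pos (by linarith) (by linarith))
      have hid : p * x * (1 - x ^ 2) + ((p * (1 - x)) ^ 2 - 2 * x * (p * (1 - x)))
          = p * (1 - x) * ((1 - x) * (p - x)) := by ring
      linarith
    · have hx23 : x ≤ 2/3 := by nlinarith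
      have k1 : x ≤ p * u * x := by
        calc x ≤ p * (1 - x) := hcase
        _ ≤ p * (u * x) := by
            apply mul_le_mul_of_nonneg_left _ hp0.le
            rw [hux]; exact hNx
        _ = p * u * x := by ring
      have hpu1 : 1 ≤ p * u := le_of_mul_le_mul_right (by linarith) hx0
      have k2 : 1 - x ^ 2 ≤ p * u * (1 - x ^ 2) := by
        nlinarith [mul_le_mul_of_nonneg_right hpu1 (by nlinarith : (0:ℝ) ≤ 1 - x ^ 2)]
      nlinarith [sq_nonneg (x - N), hx23, k2, hx0]

lemma deriv_g1_neg {p x : ℝ} (hp0 : 0 < p) (hp2 : p ≤ 2) (hx0 : 0 < x) (hx1 : x < 1) :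
    ∃ d, HasDerivAt (g1 p) d x ∧ d < 0 := by
  set P := p * x ^ (p - 1) with hP
  have hP0 : 0 < P := mul_pos hp0 (Real.rpow_pos_of_pos hx0 _)
  have hxp : HasDerivAt (fun y : ℝ => y ^ p) P x := Real.hasDerivAt_rpow_const (Or.inl hx0.ne')
  have hNd : HasDerivAt (fun y : ℝ => 1 - y ^ p) (-P) x := hxp.const_sub 1
  set N := 1 - x ^ p with hN
  have hN0 : 0 < N := by
    have : x ^ p < 1 := Real.rpow_lt_one hx0.le hx1 hp0
    simp [hN]; linarith
  set D := 1 - x ^ 2 + N ^ 2 with hD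
  have hD0 : 0 < D := by nlinarith [sq_nonneg N]
  have hDd : HasDerivAt (fun y : ℝ => 1 - y ^ 2 + (1 - y ^ p) ^ 2)
      (-(2 * x) + 2 * N * (-P)) x := by
    have h1 : HasDerivAt (fun y : ℝ => 1 - y ^ 2) (-(2 * x)) x := by
      have := (hasDerivAt_pow 2 x).const_sub 1
      exact this.congr_deriv (by push_cast; ring)
    have h2 : HasDerivAt (fun y : ℝ => (1 - y ^ p) ^ 2) (2 * N * (-P)) x := by
      have := hNd.pow 2
      exact this.congr_deriv (by rw [hN]; push_cast; ring)
    exact h1.add h2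
  set s := Real.sqrt D with hs
  have hs0 : 0 < s := Real.sqrt_pos.2 hD0
  have hsq : s * s = D := Real.mul_self_sqrt hD0.le
  have hsder : HasDerivAt (fun y : ℝ => Real.sqrt (1 - y ^ 2 + (1 - y ^ p) ^ 2))
      ((-(2 * x) + 2 * N * (-P)) / (2 * s)) x := by
    have := hDd.sqrt (by rw [← hD]; exact hD0.ne')
    convert this using 2
  have hg1 : HasDerivAt (g1 p)
      ((-P * s - N * ((-(2 * x) + 2 * N * (-P)) / (2 * s))) / s ^ 2) x := by
    have := hNd.div hsder (by rw [← hD, ← hs]; exact hs0.ne')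
    exact this
  refine ⟨_, hg1, ?_⟩
  set Q := -P * s - N * ((-(2 * x) + 2 * N * (-P)) / (2 * s)) with hQ
  have hQs : Q * (2 * s) = 2 * (x * N - P * (1 - x ^ 2)) := by
    rw [hQ]
    field_simp
    nlinarith [hsq]
  have hQneg : Q < 0 := by
    have h2 : Q * (2 * s) < 0 := by
      rw [hQs]
      have h3 := psi_lt hp0 hp2 hx0 hx1
      rw [← hP, ← hN] at h3
      linarith
    nlinarith [hs0]
  exact div_neg_of_neg_of_pos hQneg (by positivity)

lemma deriv_g2_neg {p x : ℝ} (hp0 : 0 < p) (hp2 : p ≤ 2) (hx0 : 0 < x) (hx1 : x < 1)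
    (hNx : 1 - x ≤ x ^ p) :
    ∃ d, HasDerivAt (g2 p) d x ∧ d < 0 := by
  set P := p * x ^ (p - 1) with hP
  have hP0 : 0 < P := mul_pos hp0 (Real.rpow_pos_of_pos hx0 _)
  have hxp : HasDerivAt (fun y : ℝ => y ^ p) P x := Real.hasDerivAt_rpow_const (Or.inl hx0.ne')
  have hNd : HasDerivAt (fun y : ℝ => 1 - y ^ p) (-P) x := hxp.const_sub 1
  set N := 1 - x ^ p with hN
  have hN0 : 0 < N := by
    have : x ^ p < 1 := Real.rpow_lt_one hx0.le hx1 hp0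
    simp [hN]; linarith
  set D := 1 - x ^ 2 + x * N with hD
  have hD0 : 0 < D := by nlinarith
  have hDd : HasDerivAt (fun y : ℝ => 1 - y ^ 2 + y * (1 - y ^ p))
      (-(2 * x) + (1 * N + x * (-P))) x := by
    have h1 : HasDerivAt (fun y : ℝ => 1 - y ^ 2) (-(2 * x)) x := by
      have := (hasDerivAt_pow 2 x).const_sub 1
      exact this.congr_deriv (by push_cast; ring)
    have h2 : HasDerivAt (fun y : ℝ => y * (1 - y ^ p)) (1 * N + x * (-P)) x :=
      (hasDerivAt_id x).mul hNd
    exact h1.add h2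
  have hg2 : HasDerivAt (g2 p)
      ((-P * D - N * (-(2 * x) + (1 * N + x * (-P)))) / D ^ 2) x := by
    have := hNd.div hDd (by rw [← hD]; exact hD0.ne')
    exact this
  refine ⟨_, hg2, ?_⟩
  apply div_neg_of_neg_of_pos _ (by positivity)
  have h3 := F_pos hp0 hp2 hx0 hx1 hNx
  rw [← hP, ← hN] at h3
  rw [hD]
  nlinarith [h3]

end Statement2Aux

section Part2
open Statement2Aux

variable {p : ℝ}

namespace Statement2Aux

lemma rp_branch1 {p y : ℝ} (hy : y < Cp p) (hy1 : y ≠ 1) : rp p y = g1 p y := by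
  simp [rp, g1, hy, hy1]

lemma rp_branch2 {p y : ℝ} (hy : ¬ y < Cp p) (hy1 : y ≠ 1) : rp p y = g2 p y := by
  simp [rp, g2, hy, hy1]

lemma rp_at_one {p : ℝ} : rp p 1 = p / (2 + p) := by simp [rp]

lemma rp_at_C (hp0 : 0 < p) : rp p (Cp p) = Cp p ∧ g1 p (Cp p) = Cp p := by
  obtain ⟨⟨hC0, hC1⟩, hCeq⟩ := Cp_spec hp0
  have hCp : Cp p ^ p = 1 - Cp p := by linarith
  constructor
  · rw [rp_branch2 (lt_irrefl _) hC1.ne]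
    rw [g2, hCp]
    have h1 : (1:ℝ) - (1 - Cp p) = Cp p := by ring
    rw [h1]
    have h2 : 1 - Cp p ^ 2 + Cp p * Cp p = 1 := by ring
    rw [h2, div_one]
  · rw [g1, hCp]
    have h1 : (1:ℝ) - (1 - Cp p) = Cp p := by ring
    rw [h1]
    have h2 : 1 - Cp p ^ 2 + Cp p ^ 2 = 1 := by ring
    rw [h2, Real.sqrt_one, div_one]

lemma rp_eq_g1_on (hp0 : 0 < p) : Set.EqOn (rp p) (g1 p) (Set.Icc 0 (Cp p)) := by
  obtain ⟨⟨hC0, hC1⟩, _⟩ := Cp_spec hp0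
  intro y hy
  rcases lt_or_eq_of_le hy.2 with h | h
  · exact rp_branch1 h (by intro he; rw [he] at h; linarith)
  · rw [h]; rw [(rp_at_C hp0).1, (rp_at_C hp0).2]

lemma contOn_g1 (hp0 : 0 < p) : ContinuousOn (g1 p) (Set.Icc 0 (Cp p)) := by
  obtain ⟨⟨hC0, hC1⟩, _⟩ := Cp_spec hp0
  have hnum : Continuous (fun y : ℝ => 1 - y ^ p) :=
    continuous_const.sub (Real.continuous_rpow_const hp0.le)
  have hden : Continuous (fun y : ℝ => Real.sqrt (1 - y ^ 2 + (1 - y ^ p) ^ 2)) := by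
    apply Continuous.sqrt
    exact (continuous_const.sub (continuous_pow 2)).add (hnum.pow 2)
  apply ContinuousOn.div hnum.continuousOn hden.continuousOn
  intro y hy
  have h1 : 0 < 1 - y ^ 2 + (1 - y ^ p) ^ 2 := by
    have : y ^ 2 < 1 := by nlinarith [hy.1, hy.2, hC1]
    nlinarith [sq_nonneg (1 - y ^ p)]
  positivity

lemma contOn_rp_left (hp0 : 0 < p) : ContinuousOn (rp p) (Set.Icc 0 (Cp p)) :=
  (contOn_g1 hp0).congr (rp_eq_g1_on hp0)

lemma anti_left (hp0 : 0 < p) (hp2 : p ≤ 2) : StrictAntiOn (rp p) (Set.Icc 0 (Cp p)) := by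
  obtain ⟨⟨hC0, hC1⟩, _⟩ := Cp_spec hp0
  apply strictAntiOn_of_deriv_neg (convex_Icc _ _) (contOn_rp_left hp0)
  intro x hx
  rw [interior_Icc] at hx
  have heq : rp p =ᶠ[𝓝 x] g1 p := by
    filter_upwards [Iio_mem_nhds hx.2] with y hy
    exact rp_branch1 hy (by intro he; rw [he] at hy; exact absurd (hy.trans hC1) (lt_irrefl 1))
  rw [heq.deriv_eq]
  obtain ⟨d, hd, hdneg⟩ := deriv_g1_neg hp0 hp2 hx.1 (hx.2.trans hC1)
  rwa [hd.deriv]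

lemma anti_right (hp0 : 0 < p) (hp2 : p ≤ 2) (hcont : ContinuousOn (rp p) (Set.Icc (Cp p) 1)) :
    StrictAntiOn (rp p) (Set.Icc (Cp p) 1) := by
  obtain ⟨⟨hC0, hC1⟩, hCeq⟩ := Cp_spec hp0
  apply strictAntiOn_of_deriv_neg (convex_Icc _ _) hcont
  intro x hx
  rw [interior_Icc] at hx
  have heq : rp p =ᶠ[𝓝 x] g2 p := by
    filter_upwards [IsOpen.mem_nhds isOpen_Ioo hx] with y hy
    exact rp_branch2 (not_lt.2 hy.1.le) hy.2.ne
  rw [heq.deriv_eq]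
  have hNx : 1 - x ≤ x ^ p := by
    have h1 : Cp p ^ p ≤ x ^ p := Real.rpow_le_rpow hC0.le hx.1.le hp0.le
    have hxC : Cp p < x := hx.1
    linarith
  obtain ⟨d, hd, hdneg⟩ := deriv_g2_neg hp0 hp2 (hC0.trans hx.1) hx.2 hNx
  rwa [hd.deriv]

end Statement2Aux
end Part2

namespace Statement2Aux

lemma contOn_rp_right {p : ℝ} (hp0 : 0 < p) : ContinuousOn (rp p) (Set.Icc (Cp p) 1) := by
  obtain ⟨⟨hC0, hC1⟩, hCeq⟩ := Cp_spec hp0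
  intro x hx
  rcases eq_or_lt_of_le hx.2 with h1 | h1
  · -- x = 1
    subst h1
    rw [← continuousWithinAt_diff_self]
    unfold ContinuousWithinAt
    rw [rp_at_one]
    have hslope : Tendsto (slope (fun y : ℝ => y ^ p) 1) (𝓝[≠] 1) (𝓝 p) := by
      have hD : HasDerivAt (fun y : ℝ => y ^ p) (p * 1 ^ (p - 1)) 1 :=
        Real.hasDerivAt_rpow_const (Or.inl one_ne_zero)
      rw [Real.one_rpow, mul_one] at hD
      exact hasDerivAt_iff_tendsto_slope.mp hD
    have hid : Tendsto (fun y : ℝ => y) (𝓝[≠] (1:ℝ)) (𝓝 1) :=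
      tendsto_id.mono_left nhdsWithin_le_nhds
    have hden : Tendsto (fun y => (1 + y) + y * slope (fun z : ℝ => z ^ p) 1 y) (𝓝[≠] (1:ℝ))
        (𝓝 ((1 + 1) + 1 * p)) :=
      ((tendsto_const_nhds.add hid).add (hid.mul hslope))
    have h2p : ((1:ℝ) + 1) + 1 * p ≠ 0 := by nlinarith
    have htot : Tendsto
        (fun y => slope (fun z : ℝ => z ^ p) 1 y / ((1 + y) + y * slope (fun z : ℝ => z ^ p) 1 y))
        (𝓝[≠] (1:ℝ)) (𝓝 (p / (2 + p))) := by
      have := hslope.div hden h2p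
      convert this using 2
      all_goals norm_num
    apply Filter.Tendsto.congr' _ (htot.mono_left (nhdsWithin_mono 1 ?_))
    swap
    · intro y hy
      simp only [Set.mem_diff, Set.mem_singleton_iff] at hy
      exact hy.2
    · filter_upwards [self_mem_nhdsWithin] with y hy
      simp only [Set.mem_diff, Set.mem_singleton_iff, Set.mem_Icc] at hy
      obtain ⟨⟨hyC, hy1le⟩, hy1⟩ := hy
      have hy1' : y < 1 := lt_of_le_of_ne hy1le hy1
      have hy0 : 0 < y := hC0.trans_le hyC
      have hyp1 : y ^ p < 1 := Real.rpow_lt_one hy0.le hy1' hp0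
      have hD2 : 0 < 1 - y ^ 2 + y * (1 - y ^ p) := by nlinarith
      rw [rp_branch2 (not_lt.2 hyC) hy1, g2]
      have hsl : slope (fun z : ℝ => z ^ p) 1 y = (y ^ p - 1) / (y - 1) := by
        rw [slope_def_field, Real.one_rpow]
      have hy1ne : y - 1 ≠ 0 := by intro h; apply hy1; linarith
      have hy1ne' : (1:ℝ) - y ≠ 0 := by intro h; apply hy1; linarith
      have hsl2 : (y ^ p - 1) / (y - 1) = (1 - y ^ p) / (1 - y) := by
        rw [div_eq_div_iff hy1ne hy1ne']; ring
      rw [hsl, hsl2]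
      have hdenne : (1 + y) + y * ((1 - y ^ p) / (1 - y)) =
          (1 - y ^ 2 + y * (1 - y ^ p)) / (1 - y) := by
        field_simp
        ring
      rw [hdenne, div_div_div_cancel_right₀ hy1ne']
  · -- x < 1
    have hx0 : 0 < x := hC0.trans_le hx.1
    have hxp1 : x ^ p < 1 := Real.rpow_lt_one hx0.le h1 hp0
    have hD2 : 0 < 1 - x ^ 2 + x * (1 - x ^ p) := by nlinarith
    have hg2cont : ContinuousWithinAt (g2 p) (Set.Icc (Cp p) 1) x := by
      apply ContinuousAt.continuousWithinAt
      apply ContinuousAt.div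
      · exact (continuous_const.sub (Real.continuous_rpow_const hp0.le)).continuousAt
      · exact ((continuous_const.sub (continuous_pow 2)).add
          (continuous_id.mul (continuous_const.sub
            (Real.continuous_rpow_const hp0.le)))).continuousAt
      · exact hD2.ne'
    apply hg2cont.congr_of_eventuallyEq
    · have hIio : Set.Iio (1:ℝ) ∈ 𝓝[Set.Icc (Cp p) 1] x :=
        nhdsWithin_le_nhds (Iio_mem_nhds h1)
      filter_upwards [hIio, self_mem_nhdsWithin] with y hy1 hy2
      exact rp_branch2 (not_lt.2 hy2.1) (ne_of_lt hy1)
    · exact rp_branch2 (not_lt.2 hx.1) (ne_of_lt h1)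

end Statement2Aux

/-- For each `p ∈ (0,2]`, the function `r_p` is continuous and strictly decreasing on
`[0,1]`, with `r_p(0) = 1/√2` and `r_p(1) = p/(2+p)`. -/
theorem statement2 (p : ℝ) (hp0 : 0 < p) (hp2 : p ≤ 2) :
    ContinuousOn (rp p) (Set.Icc (0 : ℝ) 1) ∧
    StrictAntiOn (rp p) (Set.Icc (0 : ℝ) 1) ∧
    rp p 0 = 1 / Real.sqrt 2 ∧
    rp p 1 = p / (2 + p) := by
  obtain ⟨⟨hC0, hC1⟩, hCeq⟩ := Statement2Aux.Cp_spec hp0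
  have hcont2 := Statement2Aux.contOn_rp_right hp0
  have hanti1 := Statement2Aux.anti_left hp0 hp2
  have hanti2 := Statement2Aux.anti_right hp0 hp2 hcont2
  have hcont1 := Statement2Aux.contOn_rp_left hp0
  have hsub : Set.Icc (0:ℝ) 1 ⊆ Set.Icc 0 (Cp p) ∪ Set.Icc (Cp p) 1 := by
    intro z hz
    rcases le_total z (Cp p) with h | h
    · exact Or.inl ⟨hz.1, h⟩
    · exact Or.inr ⟨h, hz.2⟩
  refine ⟨?_, ?_, ?_, Statement2Aux.rp_at_one⟩
  · -- continuity
    intro x hx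
    have cwa1 : ContinuousWithinAt (rp p) (Set.Icc 0 (Cp p)) x := by
      by_cases h : x ∈ Set.Icc 0 (Cp p)
      · exact hcont1 x h
      · apply continuousWithinAt_of_notMem_closure
        rwa [IsClosed.closure_eq isClosed_Icc]
    have cwa2 : ContinuousWithinAt (rp p) (Set.Icc (Cp p) 1) x := by
      by_cases h : x ∈ Set.Icc (Cp p) 1
      · exact hcont2 x h
      · apply continuousWithinAt_of_notMem_closure
        rwa [IsClosed.closure_eq isClosed_Icc]
    exact (cwa1.union cwa2).mono hsub
  · -- strict anti
    intro x hx y hy hxy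
    rcases le_total y (Cp p) with hyC | hyC
    · exact hanti1 ⟨hx.1, (hxy.le.trans hyC)⟩ ⟨hy.1, hyC⟩ hxy
    · rcases le_total (Cp p) x with hxC | hxC
      · exact hanti2 ⟨hxC, hx.2⟩ ⟨hyC, hy.2⟩ hxy
      · rcases eq_or_lt_of_le hyC with hyeq | hylt
        · subst hyeq
          exact hanti1 ⟨hx.1, hxC⟩ ⟨hC0.le, le_refl _⟩ hxy
        · calc rp p y < rp p (Cp p) :=
                hanti2 ⟨le_refl _, hC1.le⟩ ⟨hyC, hy.2⟩ hylt
          _ ≤ rp p x := by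
              rcases eq_or_lt_of_le hxC with hxeq | hxlt
              · rw [hxeq]
              · exact le_of_lt (hanti1 ⟨hx.1, hxC⟩ ⟨hC0.le, le_refl _⟩ hxlt)
  · -- value at 0
    have h01 : (0:ℝ) ≠ 1 := by norm_num
    rw [Statement2Aux.rp_branch1 hC0 h01, Statement2Aux.g1]
    rw [Real.zero_rpow hp0.ne']
    norm_num
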